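/- arXiv:2507.12733 — 6 statements merged into one kernel-verified Lean document; each statement's English description precedes it below -/
import Mathlib

section
/- Define F₂₀ : [0,1] → ℝ by F₂₀(x) = 0 for 0 ≤ x ≤ 1/3, F₂₀(x) = (3x−1)(x+1)/(3x²) for 1/3 < x ≤ 1/2, and F₂₀(x) = 1 for 1/2 < x ≤ 1. Then F₂₀ is nondecreasing with values in [0,1]; for every x ∈ (1/3, 1/2] the quantile q(x) := 1 − F₂₀(x) equals (1−2x)/(3x²) and satisfies x·q(x) = (−1 + √(1 + 3·q(x)))/3; the function q ↦ (−1 + √(1+3q))/3 is concave on [0,1]; and max_{p ∈ [0,1]} p·(1 − F₂₀(p)) = 1/3, attained at p = 1/3. -/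
open Set

/-- The baseline CDF `F₂₀` of the second regular buyer. -/
noncomputable def F₂₀ : ℝ → ℝ := fun x =>
  if x ≤ 1/3 then 0 else if x ≤ 1/2 then (3*x - 1)*(x + 1)/(3*x^2) else 1

theorem stmt1 :
    MonotoneOn F₂₀ (Icc (0:ℝ) 1) ∧
    (∀ x ∈ Icc (0:ℝ) 1, F₂₀ x ∈ Icc (0:ℝ) 1) ∧
    (∀ x ∈ Ioc (1/3 : ℝ) (1/2),
      1 - F₂₀ x = (1 - 2*x)/(3*x^2) ∧
      x * (1 - F₂₀ x) = (-1 + Real.sqrt (1 + 3*(1 - F₂₀ x)))/3) ∧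
    ConcaveOn ℝ (Icc (0:ℝ) 1) (fun q => (-1 + Real.sqrt (1 + 3*q))/3) ∧
    IsGreatest ((fun p => p * (1 - F₂₀ p)) '' Icc (0:ℝ) 1) (1/3) ∧
    (1/3 : ℝ) * (1 - F₂₀ (1/3)) = 1/3 := by
  refine ⟨?_, ?_, ?_, ?_, ?_, ?_⟩
  · -- monotone
    intro a ha b hb hab
    simp only [F₂₀]
    split_ifs with h1 h2 h3 h4 h5 h6 h7 h8
    · exact le_refl 0
    · apply div_nonneg
      · nlinarith
      · nlinarith
    · exact zero_le_one
    · linarith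
    · rw [div_le_div_iff₀ (by nlinarith) (by nlinarith)]
      nlinarith [mul_nonneg (sub_nonneg.2 hab) (by nlinarith : (0:ℝ) ≤ a + b - 2*a*b)]
    · rw [div_le_one (by nlinarith)]
      nlinarith
    · linarith
    · linarith
    · exact le_refl 1
  · -- values in [0,1]
    intro x hx
    simp only [F₂₀]
    split_ifs with h1 h2
    · exact ⟨le_refl 0, zero_le_one⟩
    · constructor
      · apply div_nonneg <;> nlinarith
      · rw [div_le_one (by nlinarith)]; nlinarith
    · exact ⟨zero_le_one, le_refl 1⟩
  · -- quantile formulas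
    intro x hx
    have hx1 : (1:ℝ)/3 < x := hx.1
    have hx2 : x ≤ 1/2 := hx.2
    have hF : F₂₀ x = (3*x - 1)*(x + 1)/(3*x^2) := by
      simp only [F₂₀]; rw [if_neg (by linarith), if_pos hx2]
    have hxpos : (0:ℝ) < x := by linarith
    have hq : 1 - F₂₀ x = (1 - 2*x)/(3*x^2) := by
      rw [hF]; field_simp; ring
    refine ⟨hq, ?_⟩
    rw [hq]
    have h1 : 1 + 3*((1 - 2*x)/(3*x^2)) = ((1-x)/x)^2 := by
      field_simp; ring
    rw [h1, Real.sqrt_sq (by apply div_nonneg <;> linarith)]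
    field_simp
    ring
  · -- concavity
    have hs := Real.strictConcaveOn_sqrt.concaveOn
    refine ⟨convex_Icc 0 1, ?_⟩
    intro x hx y hy a b ha hb hab
    have h := hs.2 (show (1+3*x : ℝ) ∈ Ici 0 by simp; linarith [hx.1])
      (show (1+3*y : ℝ) ∈ Ici 0 by simp; linarith [hy.1]) ha hb hab
    simp only [smul_eq_mul] at h ⊢
    have he : a * (1+3*x) + b * (1+3*y) = 1 + 3*(a*x + b*y) := by
      nlinarith [hab]
    rw [he] at h
    nlinarith [h]
  · -- IsGreatest
    constructor
    · refine ⟨1/3, ⟨by norm_num, by norm_num⟩, ?_⟩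
      simp only [F₂₀]
      norm_num
    · rintro v ⟨p, hp, rfl⟩
      simp only [F₂₀]
      split_ifs with h1 h2
      · simp; linarith
      · have hppos : (0:ℝ) < p := by linarith
        have : p * (1 - (3*p - 1)*(p + 1)/(3*p^2)) = (1 - 2*p)/(3*p) := by
          field_simp; ring
        rw [this, div_le_div_iff₀ (by linarith) (by norm_num)]
        nlinarith
      · simp
  · simp only [F₂₀]; norm_num
end

section
/- Let 0 < ε ≤ 0.09, let p ∈ [0.259, 1/3], and let q ∈ [0,1] satisfy 0 ≤ p − q ≤ ε/3. Then d(p, q) ≤ (2/3)·ε², where d(x,y) = x·log(x/y) + (1−x)·log((1−x)/(1−y)) is the Kullback–Leibler divergence between Bernoulli distributions with means x and y. -/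
open Set

/-- Bernoulli Kullback–Leibler divergence `d(x,y)`. -/
noncomputable def bernKL (x y : ℝ) : ℝ :=
  x * Real.log (x/y) + (1-x) * Real.log ((1-x)/(1-y))

theorem stmt6 (ε p q : ℝ) (hε : 0 < ε) (hε' : ε ≤ 0.09)
    (hp : p ∈ Icc (0.259 : ℝ) (1/3)) (hq : q ∈ Icc (0:ℝ) 1)
    (h1 : 0 ≤ p - q) (h2 : p - q ≤ ε/3) :
    bernKL p q ≤ (2/3) * ε^2 := by
  obtain ⟨hp1, hp2⟩ := hp
  have hq1 : (0.229:ℝ) ≤ q := by nlinarith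
  have hq2 : q ≤ 1/3 := by linarith
  have hq0 : 0 < q := by linarith
  have hq1' : q < 1 := by linarith
  have hp0 : 0 < p := by linarith
  have hp1' : p < 1 := by linarith
  have l1 : Real.log (p/q) ≤ p/q - 1 :=
    Real.log_le_sub_one_of_pos (by positivity)
  have l2 : Real.log ((1-p)/(1-q)) ≤ (1-p)/(1-q) - 1 :=
    Real.log_le_sub_one_of_pos (by
      apply div_pos <;> linarith)
  have key : bernKL p q ≤ (p-q)^2/(q*(1-q)) := by
    unfold bernKL
    have hq0' : q ≠ 0 := ne_of_gt hq0
    have h1q : (1:ℝ)-q ≠ 0 := by intro h; linarith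
    have h3 : p*(p/q-1) + (1-p)*((1-p)/(1-q)-1) = (p-q)^2/(q*(1-q)) := by
      field_simp
      ring
    calc p * Real.log (p/q) + (1-p) * Real.log ((1-p)/(1-q))
        ≤ p*(p/q-1) + (1-p)*((1-p)/(1-q)-1) := by
          gcongr <;> linarith
      _ = (p-q)^2/(q*(1-q)) := h3
  have hden : (1:ℝ)/6 ≤ q*(1-q) := by nlinarith [mul_nonneg (by linarith : (0:ℝ) ≤ q - 0.229) (by linarith : (0:ℝ) ≤ 1/3 - q)]
  have hnum : (p-q)^2 ≤ ε^2/9 := by nlinarith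
  have : (p-q)^2/(q*(1-q)) ≤ (2/3)*ε^2 := by
    rw [div_le_iff₀ (by linarith)]
    nlinarith [sq_nonneg ε]
  linarith
end

section
/- Let a ∈ [1, 2] and b ∈ (0, 0.1], and define F(x) = (3x−1)(x+a)(x+b)/(3x³). Then for every x ∈ [1/3, 1]: 2·F'(x)² + (1 − F(x))·F''(x) ≥ 0. -/
open Set

private lemma hd3x (y : ℝ) : HasDerivAt (fun x : ℝ => 3*x-1) 3 y := by
  simpa using ((hasDerivAt_id y).const_mul 3).sub_const 1

private lemma hdN (a b y : ℝ) :
    HasDerivAt (fun x : ℝ => (3*x-1)*(x+a)*(x+b))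
      ((3*(y+a)+(3*y-1))*(y+b) + (3*y-1)*(y+a)) y := by
  have h1 : HasDerivAt (fun x : ℝ => (3*x-1)*(x+a)) (3*(y+a)+(3*y-1)) y := by
    have := (hd3x y).mul ((hasDerivAt_id y).add_const a)
    exact this.congr_deriv (by simp only [id]; ring)
  have := h1.mul ((hasDerivAt_id y).add_const b)
  exact this.congr_deriv (by simp only [id]; ring)

private lemma hdN1 (a b y : ℝ) :
    HasDerivAt (fun x : ℝ => (3*(x+a)+(3*x-1))*(x+b) + (3*x-1)*(x+a))
      ((6*(y+b) + (3*(y+a)+(3*y-1))) + (3*(y+a)+(3*y-1))) y := by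
  have h1 : HasDerivAt (fun x : ℝ => 3*(x+a)+(3*x-1)) 6 y := by
    have := (((hasDerivAt_id y).add_const a).const_mul 3).add (hd3x y)
    exact this.congr_deriv (by norm_num)
  have h2 : HasDerivAt (fun x : ℝ => (3*(x+a)+(3*x-1))*(x+b))
      (6*(y+b) + (3*(y+a)+(3*y-1))) y := by
    have := h1.mul ((hasDerivAt_id y).add_const b)
    exact this.congr_deriv (by simp only [id]; ring)
  have h3 : HasDerivAt (fun x : ℝ => (3*x-1)*(x+a)) (3*(y+a)+(3*y-1)) y := by
    have := (hd3x y).mul ((hasDerivAt_id y).add_const a)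
    exact this.congr_deriv (by simp only [id]; ring)
  exact h2.add h3

private lemma hdD (y : ℝ) : HasDerivAt (fun x : ℝ => 3*x^3) (9*y^2) y := by
  have := (hasDerivAt_pow 3 y).const_mul 3
  exact this.congr_deriv (by push_cast; ring)

private lemma hdD1 (y : ℝ) : HasDerivAt (fun x : ℝ => 9*x^2) (18*y) y := by
  have := (hasDerivAt_pow 2 y).const_mul 9
  exact this.congr_deriv (by push_cast; ring)

private lemma hdf (a b y : ℝ) (hy : y ≠ 0) :
    HasDerivAt (fun x : ℝ => (3*x-1)*(x+a)*(x+b)/(3*x^3))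
      ((((3*(y+a)+(3*y-1))*(y+b) + (3*y-1)*(y+a)) * (3*y^3)
          - (3*y-1)*(y+a)*(y+b) * (9*y^2)) / (3*y^3)^2) y :=
  (hdN a b y).div (hdD y) (by positivity)

private lemma hdg (a b y : ℝ) (hy : y ≠ 0) :
    HasDerivAt (fun x : ℝ =>
        (((3*(x+a)+(3*x-1))*(x+b) + (3*x-1)*(x+a)) * (3*x^3)
          - (3*x-1)*(x+a)*(x+b) * (9*x^2)) / (3*x^3)^2)
      (((((6*(y+b) + (3*(y+a)+(3*y-1))) + (3*(y+a)+(3*y-1))) * (3*y^3)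
            + ((3*(y+a)+(3*y-1))*(y+b) + (3*y-1)*(y+a)) * (9*y^2)
          - (((3*(y+a)+(3*y-1))*(y+b) + (3*y-1)*(y+a)) * (9*y^2)
            + (3*y-1)*(y+a)*(y+b) * (18*y))) * (3*y^3)^2
        - (((3*(y+a)+(3*y-1))*(y+b) + (3*y-1)*(y+a)) * (3*y^3)
            - (3*y-1)*(y+a)*(y+b) * (9*y^2))
          * (2 * (3*y^3)^1 * (9*y^2))) / ((3*y^3)^2)^2) y := by
  have hu : HasDerivAt (fun x : ℝ =>
      ((3*(x+a)+(3*x-1))*(x+b) + (3*x-1)*(x+a)) * (3*x^3)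
        - (3*x-1)*(x+a)*(x+b) * (9*x^2))
      ((((6*(y+b) + (3*(y+a)+(3*y-1))) + (3*(y+a)+(3*y-1))) * (3*y^3)
          + ((3*(y+a)+(3*y-1))*(y+b) + (3*y-1)*(y+a)) * (9*y^2))
        - (((3*(y+a)+(3*y-1))*(y+b) + (3*y-1)*(y+a)) * (9*y^2)
          + (3*y-1)*(y+a)*(y+b) * (18*y))) y :=
    ((hdN1 a b y).mul (hdD y)).sub ((hdN a b y).mul (hdD1 y))
  have hv : HasDerivAt (fun x : ℝ => (3*x^3)^2) (2 * (3*y^3)^1 * (9*y^2)) y :=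
    (hdD y).pow 2
  exact hu.div hv (by positivity)

theorem stmt9 (a b : ℝ) (ha : a ∈ Icc (1:ℝ) 2) (hb : b ∈ Ioc (0:ℝ) 0.1) :
    ∀ x ∈ Icc (1/3 : ℝ) 1,
      0 ≤ 2*(deriv (fun x : ℝ => (3*x-1)*(x+a)*(x+b)/(3*x^3)) x)^2 +
        (1 - (3*x-1)*(x+a)*(x+b)/(3*x^3)) *
          deriv (deriv (fun x : ℝ => (3*x-1)*(x+a)*(x+b)/(3*x^3))) x := by
  obtain ⟨ha1, ha2⟩ := ha
  obtain ⟨hb0, hb1⟩ := hb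
  intro x hx
  obtain ⟨hx1, hx2⟩ := hx
  have hxpos : (0:ℝ) < x := by linarith
  have hx0 : x ≠ 0 := ne_of_gt hxpos
  have d1 : deriv (fun x : ℝ => (3*x-1)*(x+a)*(x+b)/(3*x^3)) x =
      (((3*(x+a)+(3*x-1))*(x+b) + (3*x-1)*(x+a)) * (3*x^3)
          - (3*x-1)*(x+a)*(x+b) * (9*x^2)) / (3*x^3)^2 :=
    (hdf a b x hx0).deriv
  have heq : deriv (fun x : ℝ => (3*x-1)*(x+a)*(x+b)/(3*x^3)) =ᶠ[nhds x]
      (fun x : ℝ =>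
        (((3*(x+a)+(3*x-1))*(x+b) + (3*x-1)*(x+a)) * (3*x^3)
          - (3*x-1)*(x+a)*(x+b) * (9*x^2)) / (3*x^3)^2) := by
    have hmem : {y : ℝ | y ≠ 0} ∈ nhds x := isOpen_ne.mem_nhds hx0
    filter_upwards [hmem] with y hy
    exact (hdf a b y hy).deriv
  have d2 : deriv (deriv (fun x : ℝ => (3*x-1)*(x+a)*(x+b)/(3*x^3))) x =
      ((((6*(x+b) + (3*(x+a)+(3*x-1))) + (3*(x+a)+(3*x-1))) * (3*x^3)
            + ((3*(x+a)+(3*x-1))*(x+b) + (3*x-1)*(x+a)) * (9*x^2)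
          - (((3*(x+a)+(3*x-1))*(x+b) + (3*x-1)*(x+a)) * (9*x^2)
            + (3*x-1)*(x+a)*(x+b) * (18*x))) * (3*x^3)^2
        - (((3*(x+a)+(3*x-1))*(x+b) + (3*x-1)*(x+a)) * (3*x^3)
            - (3*x-1)*(x+a)*(x+b) * (9*x^2))
          * (2 * (3*x^3)^1 * (9*x^2))) / ((3*x^3)^2)^2 := by
    rw [heq.deriv_eq]
    exact (hdg a b x hx0).deriv
  rw [d1, d2]
  have key : 2*((((3*(x+a)+(3*x-1))*(x+b) + (3*x-1)*(x+a)) * (3*x^3)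
          - (3*x-1)*(x+a)*(x+b) * (9*x^2)) / (3*x^3)^2)^2 +
      (1 - (3*x-1)*(x+a)*(x+b)/(3*x^3)) *
        (((((6*(x+b) + (3*(x+a)+(3*x-1))) + (3*(x+a)+(3*x-1))) * (3*x^3)
            + ((3*(x+a)+(3*x-1))*(x+b) + (3*x-1)*(x+a)) * (9*x^2)
          - (((3*(x+a)+(3*x-1))*(x+b) + (3*x-1)*(x+a)) * (9*x^2)
            + (3*x-1)*(x+a)*(x+b) * (18*x))) * (3*x^3)^2
        - (((3*(x+a)+(3*x-1))*(x+b) + (3*x-1)*(x+a)) * (3*x^3)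
            - (3*x-1)*(x+a)*(x+b) * (9*x^2))
          * (2 * (3*x^3)^1 * (9*x^2))) / ((3*x^3)^2)^2) =
      2*(((a+b-3*a*b)^2 + a*b*(3*a+3*b-1))*x^2 + 3*a*b*(a+b-3*a*b)*x + 3*a^2*b^2)
        / (9*x^8) := by
    field_simp
    ring
  rw [key]
  have hab : 0 ≤ a + b - 3*a*b := by nlinarith
  have hapos : (0:ℝ) < a := by linarith
  have h1 : 0 ≤ a*b*(3*a+3*b-1) := by nlinarith [mul_pos hapos hb0]
  have h2 : 0 ≤ 3*a*b*(a+b-3*a*b)*x := by positivity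
  positivity
end

section
/- Let a ∈ [1, 2], b ∈ (0, 0.1], and x ∈ [1/3, 1]. Then h(x) := a²x² + abx·((1−3a)x + 3a) + b²·((1 − 3a + 9a²)x² + (3a − 9a²)x + 3a²) ≥ 0. Moreover, with P = 3a+3b−1, Q = 3ab−a−b, R = ab, one has h(x) = (PR + Q²)x² − 3QR·x + 3R² (since PR + Q² = a² + b² + ab − 3a²b − 3ab² + 9a²b², QR = 3a²b² − a²b − ab², and R² = a²b²). -/
open Set
theorem stmt11 (a b x : ℝ) (ha : a ∈ Icc (1:ℝ) 2) (hb : b ∈ Ioc (0:ℝ) 0.1)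
    (hx : x ∈ Icc (1/3 : ℝ) 1) (P Q R : ℝ)
    (hP : P = 3*a + 3*b - 1) (hQ : Q = 3*a*b - a - b) (hR : R = a*b) :
    0 ≤ a^2*x^2 + a*b*x*((1 - 3*a)*x + 3*a) +
        b^2*((1 - 3*a + 9*a^2)*x^2 + (3*a - 9*a^2)*x + 3*a^2) ∧
    a^2*x^2 + a*b*x*((1 - 3*a)*x + 3*a) +
        b^2*((1 - 3*a + 9*a^2)*x^2 + (3*a - 9*a^2)*x + 3*a^2) =
      (P*R + Q^2)*x^2 - 3*Q*R*x + 3*R^2 ∧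
    P*R + Q^2 = a^2 + b^2 + a*b - 3*a^2*b - 3*a*b^2 + 9*a^2*b^2 ∧
    Q*R = 3*a^2*b^2 - a^2*b - a*b^2 ∧
    R^2 = a^2*b^2 := by
  obtain ⟨ha1, ha2⟩ := ha
  obtain ⟨hb1, hb2⟩ := hb
  obtain ⟨hx1, hx2⟩ := hx
  norm_num at hb2
  have hx0 : (0:ℝ) ≤ x := by linarith
  have h1 : 0 ≤ (a^2 + b^2 + a*b - 3*a^2*b - 3*a*b^2 + 9*a^2*b^2) * x^2 := by
    apply mul_nonneg _ (sq_nonneg x)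
    nlinarith [sq_nonneg b, sq_nonneg (a*b), mul_pos hb1 hb1]
  have h2 : 0 ≤ 3*a*b*(a + b - 3*a*b) * x := by
    apply mul_nonneg _ hx0
    have : 3*a*b ≤ a := by nlinarith
    nlinarith [mul_pos (show (0:ℝ) < a by linarith) hb1]
  have h3 : 0 ≤ 3*(a*b)^2 := by positivity
  refine ⟨by linarith [h1, h2, h3, sq_nonneg (a*b)], by subst hP hQ hR; ring,
    by subst hP hQ hR; ring, by subst hQ hR; ring, by subst hR; ring⟩
end

section
/- Let a ∈ [1, 2] and b ∈ (0, 0.1], and define c = (a + b − 3ab + √((3ab + a + b)² − 4ab))/(2·(3(a+b) − 1)). Then: (i) (3(a+b) − 1)·c² + (3ab − a − b)·c − ab = 0, and consequently c·(1 − c²/((c+a)(c+b))) = 1/3; (ii) a/(3(a+b) − 1) ≤ c; and (iii) 0 ≤ a/(3a−1) − c ≤ 3ab/(3a−1)² ≤ b. -/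
open Set

set_option maxHeartbeats 1000000 in
theorem stmt12 (a b : ℝ) (ha : a ∈ Icc (1:ℝ) 2) (hb : b ∈ Ioc (0:ℝ) 0.1)
    (c : ℝ)
    (hc : c = (a + b - 3*a*b + Real.sqrt ((3*a*b + a + b)^2 - 4*a*b)) / (2*(3*(a+b) - 1))) :
    ((3*(a+b) - 1)*c^2 + (3*a*b - a - b)*c - a*b = 0 ∧
      c * (1 - c^2/((c+a)*(c+b))) = 1/3) ∧
    a/(3*(a+b) - 1) ≤ c ∧
    (0 ≤ a/(3*a - 1) - c ∧ a/(3*a - 1) - c ≤ 3*a*b/(3*a - 1)^2 ∧ 3*a*b/(3*a - 1)^2 ≤ b) := by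
  obtain ⟨ha1, ha2⟩ := ha
  obtain ⟨hb1, hb2⟩ := hb
  rw [show (0.1:ℝ) = 1/10 by norm_num] at hb2
  set s : ℝ := Real.sqrt ((3*a*b + a + b)^2 - 4*a*b) with hs_def
  have hA : (0:ℝ) < 3*(a+b) - 1 := by nlinarith
  have hu : (0:ℝ) < 3*a - 1 := by nlinarith
  have hD : (0:ℝ) ≤ (3*a*b + a + b)^2 - 4*a*b := by nlinarith [sq_nonneg (a+b-3*a*b)]
  have hs0 : 0 ≤ s := Real.sqrt_nonneg _
  have hs2 : s^2 = (3*a*b + a + b)^2 - 4*a*b := Real.sq_sqrt hD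
  have hc' : c * (2*(3*(a+b) - 1)) = a + b - 3*a*b + s := by
    rw [hc]; exact div_mul_cancel₀ _ (mul_pos two_pos hA).ne'
  -- quadratic
  have key : (3*(a+b)-1) * ((3*(a+b) - 1)*c^2 + (3*a*b - a - b)*c - a*b) = 0 := by
    linear_combination ((c*(2*(3*(a+b)-1)) + (3*a*b-a-b) + s)/4) * hc' + (1/4) * hs2
  have hquad : (3*(a+b) - 1)*c^2 + (3*a*b - a - b)*c - a*b = 0 :=
    (mul_eq_zero.mp key).resolve_left (ne_of_gt hA)
  -- positivity of c
  have hcpos : 0 < c := by nlinarith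
  have hca : (0:ℝ) < c + a := by linarith
  have hcb : (0:ℝ) < c + b := by linarith
  -- revenue equation
  have hrev : c * (1 - c^2/((c+a)*(c+b))) = 1/3 := by
    have h1 : (c+a)*(c+b) ≠ 0 := by positivity
    field_simp
    linear_combination hquad
  refine ⟨⟨hquad, hrev⟩, ?_, ?_, ?_, ?_⟩
  · -- a/(3(a+b)-1) ≤ c
    rw [div_le_iff₀ hA]
    have ht : (0:ℝ) ≤ 2*a + (3*a*b - a - b) := by nlinarith
    have hsq : (2*a + (3*a*b - a - b))^2 ≤ s^2 := by
      nlinarith [hs2, mul_nonneg (mul_nonneg hb1.le hb1.le) (by linarith : (0:ℝ) ≤ a)]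
    have hsge : 2*a + (3*a*b - a - b) ≤ s :=
      (pow_le_pow_iff_left₀ ht hs0 two_ne_zero).mp hsq
    nlinarith [hc', hsge]
  · -- 0 ≤ a/(3a-1) - c
    rw [sub_nonneg, le_div_iff₀ hu]
    have hR : (0:ℝ) < 2*a*(3*(a+b)-1) + (3*a-1)*(3*a*b-a-b) := by nlinarith
    have hS0 : (0:ℝ) ≤ (3*a-1)*s := mul_nonneg hu.le hs0
    have h3 : ((3*a-1)*s)^2 = (3*a-1)^2*((3*a*b+a+b)^2-4*a*b) := by
      linear_combination (3*a-1)^2 * hs2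
    have hsq : ((3*a-1)*s)^2 ≤ (2*a*(3*(a+b)-1) + (3*a-1)*(3*a*b-a-b))^2 := by
      nlinarith [h3, mul_nonneg (mul_nonneg (sq_nonneg a) hb1.le) hA.le]
    have hsle : (3*a-1)*s ≤ 2*a*(3*(a+b)-1) + (3*a-1)*(3*a*b-a-b) :=
      (pow_le_pow_iff_left₀ hS0 hR.le two_ne_zero).mp hsq
    have h2 : c*(3*a-1)*(2*(3*(a+b)-1)) = (3*a-1)*(a+b-3*a*b+s) := by
      linear_combination (3*a-1) * hc'
    have h5 : c*(3*a-1)*(2*(3*(a+b)-1)) ≤ a*(2*(3*(a+b)-1)) := by nlinarith [h2, hsle]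
    exact le_of_mul_le_mul_right h5 (by linarith)
  · -- a/(3a-1) - c ≤ 3ab/(3a-1)^2
    have hq : (0:ℝ) < (3*a-1)^2 := by positivity
    have hE : (0:ℝ) ≤ 27*a^3 - 18*a^2 + 6*a - 1 - 9*a*b := by nlinarith
    have hS0 : (0:ℝ) ≤ (3*a-1)^2*s := mul_nonneg (sq_nonneg _) hs0
    have hsge : 2*a*(3*(a+b)-1)*(3*a-1-3*b) + (3*a-1)^2*(3*a*b-a-b) ≤ (3*a-1)^2*s := by
      rcases le_or_gt (2*a*(3*(a+b)-1)*(3*a-1-3*b) + (3*a-1)^2*(3*a*b-a-b)) 0 with hM | hM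
      · linarith
      · have hid : ((3*a-1)^2*s)^2 - (2*a*(3*(a+b)-1)*(3*a-1-3*b) + (3*a-1)^2*(3*a*b-a-b))^2
            = 12*a*(3*(a+b)-1)*b^2*(27*a^3 - 18*a^2 + 6*a - 1 - 9*a*b) := by
          linear_combination ((3*a-1)^2)^2 * hs2
        have hpos : (2*a*(3*(a+b)-1)*(3*a-1-3*b) + (3*a-1)^2*(3*a*b-a-b))^2 ≤ ((3*a-1)^2*s)^2 := by
          have h6 : (0:ℝ) ≤ 12*a*(3*(a+b)-1)*b^2*(27*a^3 - 18*a^2 + 6*a - 1 - 9*a*b) :=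
            mul_nonneg (mul_nonneg (mul_nonneg (by linarith : (0:ℝ) ≤ 12*a) hA.le) (sq_nonneg b)) hE
          linarith [hid]
        exact (pow_le_pow_iff_left₀ hM.le hS0 two_ne_zero).mp hpos
    have h4 : c*(3*a-1)^2*(2*(3*(a+b)-1)) = (3*a-1)^2*(a+b-3*a*b+s) := by
      linear_combination (3*a-1)^2 * hc'
    have h7 : (a*(3*a-1) - 3*a*b)*(2*(3*(a+b)-1)) ≤ c*(3*a-1)^2*(2*(3*(a+b)-1)) := by
      nlinarith [h4, hsge]
    have h8 : a*(3*a-1) - 3*a*b ≤ c*(3*a-1)^2 := le_of_mul_le_mul_right h7 (by linarith)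
    have heq : a/(3*a-1) - c = (a*(3*a-1) - c*(3*a-1)^2)/(3*a-1)^2 := by
      have hne : (3*a-1) ≠ 0 := hu.ne'
      rw [eq_div_iff hq.ne']
      have h9 : a/(3*a-1)*(3*a-1) = a := div_mul_cancel₀ a hne
      linear_combination (3*a-1) * h9
    rw [heq]
    gcongr
    linarith
  · -- 3ab/(3a-1)^2 ≤ b
    rw [div_le_iff₀ (by positivity : (0:ℝ) < (3*a-1)^2)]
    nlinarith [mul_nonneg hb1.le (by nlinarith : (0:ℝ) ≤ 9*a^2 - 9*a + 1)]
end

section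
/- Let a > 0 and define F(x) = (3x−1)(x+a)/(3x²) for x > 0. Then for every x > 0: 2·F'(x)² + (1 − F(x))·F''(x) = 2a²/(9x⁶). In particular 2F'(x)² + (1−F(x))F''(x) > 0 for all x > 0, so F satisfies the regularity differential inequality wherever it is defined. -/
open Set

lemma stmt15_hd1 (a x : ℝ) (hx : x ≠ 0) :
    HasDerivAt (fun x : ℝ => (3*x-1)*(x+a)/(3*x^2))
      (((1-3*a)*x + 2*a)/(3*x^3)) x := by
  have h1 : HasDerivAt (fun x : ℝ => (3*x-1)*(x+a)) (3*(x+a) + (3*x-1)*1) x := by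
    have := ((hasDerivAt_id x).const_mul 3 |>.sub_const 1).mul
      ((hasDerivAt_id x).add_const a)
    exact this.congr_deriv (by simp only [id, mul_one])
  have h2 : HasDerivAt (fun x : ℝ => 3*x^2) (3*(2*x)) x := by
    simpa using (hasDerivAt_pow 2 x).const_mul 3
  have hne : 3*x^2 ≠ 0 := by positivity
  have := h1.div h2 hne
  refine this.congr_deriv ?_
  field_simp
  ring

lemma stmt15_hd2 (a x : ℝ) (hx : x ≠ 0) :
    HasDerivAt (fun x : ℝ => ((1-3*a)*x + 2*a)/(3*x^3))
      (((6*a-2)*x - 6*a)/(3*x^4)) x := by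
  have h1 : HasDerivAt (fun x : ℝ => (1-3*a)*x + 2*a) ((1-3*a)*1) x := by
    simpa using ((hasDerivAt_id x).const_mul (1-3*a)).add_const (2*a)
  have h2 : HasDerivAt (fun x : ℝ => 3*x^3) (3*(3*x^2)) x := by
    simpa using (hasDerivAt_pow 3 x).const_mul 3
  have hne : 3*x^3 ≠ 0 := by
    simp [pow_ne_zero, hx]
  have := h1.div h2 hne
  refine this.congr_deriv ?_
  field_simp
  ring

lemma stmt15_deriv1 (a x : ℝ) (hx : x ≠ 0) :
    deriv (fun x : ℝ => (3*x-1)*(x+a)/(3*x^2)) x = ((1-3*a)*x + 2*a)/(3*x^3) :=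
  (stmt15_hd1 a x hx).deriv

lemma stmt15_deriv2 (a x : ℝ) (hx : x ≠ 0) :
    deriv (deriv (fun x : ℝ => (3*x-1)*(x+a)/(3*x^2))) x
      = ((6*a-2)*x - 6*a)/(3*x^4) := by
  have hev : deriv (fun x : ℝ => (3*x-1)*(x+a)/(3*x^2))
      =ᶠ[nhds x] (fun x : ℝ => ((1-3*a)*x + 2*a)/(3*x^3)) := by
    filter_upwards [isOpen_ne.mem_nhds hx] with y hy
    exact stmt15_deriv1 a y hy
  rw [hev.deriv_eq]
  exact (stmt15_hd2 a x hx).deriv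

theorem stmt15 (a : ℝ) (ha : 0 < a) :
    ∀ x : ℝ, 0 < x →
      2*(deriv (fun x : ℝ => (3*x-1)*(x+a)/(3*x^2)) x)^2 +
        (1 - (3*x-1)*(x+a)/(3*x^2)) *
          deriv (deriv (fun x : ℝ => (3*x-1)*(x+a)/(3*x^2))) x = 2*a^2/(9*x^6) ∧
      0 < 2*(deriv (fun x : ℝ => (3*x-1)*(x+a)/(3*x^2)) x)^2 +
        (1 - (3*x-1)*(x+a)/(3*x^2)) *
          deriv (deriv (fun x : ℝ => (3*x-1)*(x+a)/(3*x^2))) x := by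
  intro x hx
  have hx' : x ≠ 0 := ne_of_gt hx
  have heq : 2*(deriv (fun x : ℝ => (3*x-1)*(x+a)/(3*x^2)) x)^2 +
        (1 - (3*x-1)*(x+a)/(3*x^2)) *
          deriv (deriv (fun x : ℝ => (3*x-1)*(x+a)/(3*x^2))) x = 2*a^2/(9*x^6) := by
    rw [stmt15_deriv1 a x hx', stmt15_deriv2 a x hx']
    field_simp
    ring
  refine ⟨heq, ?_⟩
  rw [heq]
  positivity
end
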